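/- Consider the coupled ODE system ∂_t α = 2p·α·β·cos(D), ∂_t β = p·α²·cos(D), ∂_t D = -p·(4β + α²/β)·sin(D) with β(t) > 0. Then the quantity sin(D(t))·β(t)·α(t)² is constant in time. -/

import Mathlib

open Real
set_option maxHeartbeats 1000000

/-- For the coupled system `α' = 2pαβcos D`, `β' = pα²cos D`,
`D' = -p(4β + α²/β)sin D` with `β > 0`, the quantity `sin(D)·β·α²` is conserved. -/
theorem conservation_prod (p : ℝ) (hp : 0 < p) (α β D : ℝ → ℝ)
    (hβpos : ∀ t, 0 < β t)
    (hα : ∀ t, HasDerivAt α (2 * p * α t * β t * Real.cos (D t)) t)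
    (hβ : ∀ t, HasDerivAt β (p * (α t) ^ 2 * Real.cos (D t)) t)
    (hD : ∀ t, HasDerivAt D (-p * (4 * β t + (α t) ^ 2 / β t) * Real.sin (D t)) t) :
    ∀ t, Real.sin (D t) * β t * (α t) ^ 2 = Real.sin (D 0) * β 0 * (α 0) ^ 2 := by
  have key : ∀ t, HasDerivAt (fun t => Real.sin (D t) * β t * (α t) ^ 2) 0 t := by
    intro t
    have hs : HasDerivAt (fun t => Real.sin (D t))
        (Real.cos (D t) * (-p * (4 * β t + (α t) ^ 2 / β t) * Real.sin (D t))) t :=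
      (Real.hasDerivAt_sin (D t)).comp t (hD t)
    have h2 : HasDerivAt (fun t => Real.sin (D t) * β t)
        (Real.cos (D t) * (-p * (4 * β t + (α t) ^ 2 / β t) * Real.sin (D t)) * β t
          + Real.sin (D t) * (p * (α t) ^ 2 * Real.cos (D t))) t := hs.mul (hβ t)
    have h3 : HasDerivAt (fun t => (α t) ^ 2)
        (2 * α t * (2 * p * α t * β t * Real.cos (D t))) t := by
      have := ((hα t).fun_pow 2)
      simpa using this
    have h1 := h2.mul h3
    refine h1.congr_deriv ?_
    have hb := (hβpos t).ne'
    have hx : p * Real.cos (D t) * Real.sin (D t) * (α t) ^ 2 * ((α t) ^ 2 / β t * β t)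
        = p * Real.cos (D t) * Real.sin (D t) * (α t) ^ 2 * (α t) ^ 2 := by
      rw [div_mul_cancel₀ _ hb]
    linear_combination (-1 : ℝ) * hx
  intro t
  exact is_const_of_deriv_eq_zero (fun s => (key s).differentiableAt)
    (fun s => (key s).deriv) t 0
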